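/- Let K and L be essentially small tt-categories with K rigid, and let F : K → L be a tt-functor. If F detects ⊗-nilpotence of morphisms, i.e. every morphism f : x → y in K with F(f) = 0 satisfies f^⊗n = 0 for some n ≥ 1, then the induced map φ = Spc(F) : Spc(L) → Spc(K) is surjective. -/

import Mathlib

/-!
Basic notions of tensor-triangular geometry (Balmer), formalized from scratch:
tt-categories (pretriangulated + monoidal, with tensor exact in each variable),
tt-ideals, prime tt-ideals, the Balmer spectrum `Spc` with its topology,
tensor powers of objects and morphisms, rigidity.
-/

open CategoryTheory Category Limits ZeroObject Pretriangulated MonoidalCategory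

universe v u v' u'

namespace TT

variable (K : Type u) [Category.{v} K] [HasZeroObject K] [Preadditive K]
  [HasShift K ℤ] [∀ n : ℤ, (shiftFunctor K n).Additive] [Pretriangulated K]
  [MonoidalCategory K]

/-- The tensor is exact (triangulated) in each variable: tensoring a distinguished
triangle with an object (on either side) again yields a distinguished triangle. -/
def TensorExact : Prop :=
  ∀ (x : K) (T : Triangle K), (T ∈ distTriang K) →
    (∃ h : x ⊗ T.obj₃ ⟶ (x ⊗ T.obj₁)⟦(1:ℤ)⟧,
      Triangle.mk (x ◁ T.mor₁) (x ◁ T.mor₂) h ∈ distTriang K) ∧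
    (∃ h : T.obj₃ ⊗ x ⟶ (T.obj₁ ⊗ x)⟦(1:ℤ)⟧,
      Triangle.mk (T.mor₁ ▷ x) (T.mor₂ ▷ x) h ∈ distTriang K)

/-- Rigidity: every object `x` has a dual `x^∨`, i.e. takes part in an exact pairing
(coevaluation `η : 𝟙 ⟶ x^∨ ⊗ x` and evaluation `ε : x ⊗ x^∨ ⟶ 𝟙` satisfying the
triangle identities, which yield the adjunction `x ⊗ - ⊣ x^∨ ⊗ -`). -/
def Rigid : Prop := ∀ x : K, ∃ xd : K, Nonempty (ExactPairing xd x)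

variable {K}

/-- A tt-ideal: a (full, replete) class of objects closed under shifts, cones,
direct summands (retracts) and tensoring with arbitrary objects. -/
structure IsTTIdeal (I : Set K) : Prop where
  zero_mem : (0 : K) ∈ I
  shift_mem : ∀ (n : ℤ), ∀ x ∈ I, (x⟦n⟧ : K) ∈ I
  cone_mem : ∀ T : Triangle K, (T ∈ distTriang K) → T.obj₁ ∈ I → T.obj₂ ∈ I → T.obj₃ ∈ I
  retract_mem : ∀ x z : K, z ∈ I → ∀ (i : x ⟶ z) (r : z ⟶ x), i ≫ r = 𝟙 x → x ∈ I
  tensor_mem : ∀ x ∈ I, ∀ y : K, x ⊗ y ∈ I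
  tensor_mem' : ∀ x ∈ I, ∀ y : K, y ⊗ x ∈ I

/-- A prime tt-ideal: a proper tt-ideal `P` such that `x ⊗ y ∈ P` implies
`x ∈ P` or `y ∈ P`. -/
structure IsPrimeTTIdeal (P : Set K) extends IsTTIdeal P : Prop where
  ne_univ : P ≠ Set.univ
  mem_or_mem : ∀ x y : K, x ⊗ y ∈ P → x ∈ P ∨ y ∈ P

variable (K) in
/-- The Balmer spectrum: the set of prime tt-ideals. -/
def Spc := {P : Set K // IsPrimeTTIdeal P}

/-- The Balmer topology on `Spc K`, generated by the basic open subsets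
`U(x) = {P ∈ Spc K | x ∈ P}`. -/
instance : TopologicalSpace (Spc K) :=
  TopologicalSpace.generateFrom {U | ∃ x : K, U = {P : Spc K | x ∈ P.1}}

/-- The tt-ideal `⟨E⟩` generated by a class of objects `E`. -/
def ttIdealGen (E : Set K) : Set K := ⋂₀ {I : Set K | IsTTIdeal I ∧ E ⊆ I}

/-- `n`-fold tensor power of an object (`x^⊗0 = 𝟙`). -/
def opow (x : K) : ℕ → K
  | 0 => 𝟙_ K
  | n + 1 => opow x n ⊗ x

/-- `n`-fold tensor power `f^⊗n` of a morphism. -/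
def mpow {x y : K} (f : x ⟶ y) : ∀ n : ℕ, (opow x n ⟶ opow y n)
  | 0 => 𝟙 _
  | n + 1 => mpow f n ⊗ₘ f

end TT

set_option linter.unusedSectionVars false

namespace TT

variable {C : Type u} [Category.{v} C]

section PretriangulatedPart

variable [HasZeroObject C] [Preadditive C] [HasShift C ℤ]
  [∀ n : ℤ, (shiftFunctor C n).Additive] [Pretriangulated C] [MonoidalCategory C]

namespace IsTTIdeal

variable {I : Set C}

lemma mem_of_iso (hI : IsTTIdeal I) {x y : C} (e : x ≅ y) (hy : y ∈ I) : x ∈ I :=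
  hI.retract_mem x y hy e.hom e.inv e.hom_inv_id

lemma mem_of_isZero (hI : IsTTIdeal I) {x : C} (h : IsZero x) : x ∈ I :=
  hI.mem_of_iso (h.iso (isZero_zero C)) hI.zero_mem

lemma shift_neg_mem (hI : IsTTIdeal I) {x : C} (n : ℤ) (h : (x⟦n⟧ : C) ∈ I) : x ∈ I := by
  refine hI.mem_of_iso ((shiftEquiv C n).unitIso.app x) ?_
  exact hI.shift_mem (-n) _ h

lemma mem₁ (hI : IsTTIdeal I) (T : Triangle C) (hT : T ∈ distTriang C) (h₂ : T.obj₂ ∈ I) (h₃ : T.obj₃ ∈ I) :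
    T.obj₁ ∈ I :=
  hI.shift_neg_mem 1 (hI.cone_mem T.rotate (rot_of_distTriang T hT) h₂ h₃)

lemma mem₂ (hI : IsTTIdeal I) (T : Triangle C) (hT : T ∈ distTriang C) (h₁ : T.obj₁ ∈ I) (h₃ : T.obj₃ ∈ I) :
    T.obj₂ ∈ I :=
  hI.cone_mem T.invRotate (inv_rot_of_distTriang T hT) (hI.shift_mem (-1) _ h₃) h₁

lemma biprod_mem (hI : IsTTIdeal I) (x y : C) (hx : x ∈ I) (hy : y ∈ I) : (x ⊞ y) ∈ I :=
  hI.mem₂ _ (binaryBiproductTriangle_distinguished x y) hx hy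

lemma univ_of_unit_mem (hI : IsTTIdeal I) (h : (𝟙_ C) ∈ I) : I = Set.univ := by
  ext x
  simp only [Set.mem_univ, iff_true]
  exact hI.mem_of_iso (λ_ x).symm (hI.tensor_mem _ h x)

end IsTTIdeal

/-- Morphisms factoring through an object of `I`. -/
def FactorsThru (I : Set C) {x y : C} (f : x ⟶ y) : Prop :=
  ∃ (G : C) (_ : G ∈ I) (p : x ⟶ G) (q : G ⟶ y), p ≫ q = f

lemma FactorsThru.precomp {I : Set C} {x y z : C} {f : y ⟶ z} (hf : FactorsThru I f)
    (e : x ⟶ y) : FactorsThru I (e ≫ f) := by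
  obtain ⟨G, hG, p, q, rfl⟩ := hf
  exact ⟨G, hG, e ≫ p, q, by simp⟩

lemma FactorsThru.postcomp {I : Set C} {x y z : C} {f : x ⟶ y} (hf : FactorsThru I f)
    (e : y ⟶ z) : FactorsThru I (f ≫ e) := by
  obtain ⟨G, hG, p, q, rfl⟩ := hf
  exact ⟨G, hG, p, q ≫ e, by simp⟩

lemma factorsThru_zero {I : Set C} (hI : IsTTIdeal I) (x y : C) :
    FactorsThru I (0 : x ⟶ y) :=
  ⟨0, hI.zero_mem, 0, 0, by simp⟩

lemma FactorsThru.of_eq {I : Set C} {x y : C} {f g : x ⟶ y} (hf : FactorsThru I f)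
    (h : f = g) : FactorsThru I g := h ▸ hf

/-- **Key peeling lemma** (octahedron-free): if `ψ ≫ v` factors through `I` and the
"fiber" of `v` lies in `I`, then `ψ` factors through `I`. -/
lemma peel {I : Set C} (hI : IsTTIdeal I) (T : Triangle C) (hT : T ∈ distTriang C)
    (h₁ : T.obj₁ ∈ I) {X : C} (ψ : X ⟶ T.obj₂) (hψ : FactorsThru I (ψ ≫ T.mor₂)) :
    FactorsThru I ψ := by
  obtain ⟨G, hG, p, q, hpq⟩ := hψ
  obtain ⟨H, k, l, hT₂⟩ := distinguished_cocone_triangle (q ≫ T.mor₃)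
  have hH : H ∈ I := hI.cone_mem _ hT₂ hG (hI.shift_mem 1 _ h₁)
  have hp0 : p ≫ ((Triangle.mk (q ≫ T.mor₃) k l).invRotate).mor₂ = 0 := by
    show p ≫ (q ≫ T.mor₃) = 0
    rw [← assoc, hpq, assoc, comp_distTriang_mor_zero₂₃ _ hT, comp_zero]
  obtain ⟨χ, hχ⟩ := Triangle.coyoneda_exact₂ _ (inv_rot_of_distTriang _ hT₂) p hp0
  set m := ((Triangle.mk (q ≫ T.mor₃) k l).invRotate).mor₁ with hm
  have h1 : m ≫ (q ≫ T.mor₃) = 0 :=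
    comp_distTriang_mor_zero₁₂ _ (inv_rot_of_distTriang _ hT₂)
  have h2 : (m ≫ q) ≫ T.mor₃ = 0 := by exact (assoc _ _ _).trans h1
  obtain ⟨mt, hmt⟩ := Triangle.coyoneda_exact₃ _ hT (m ≫ q) h2
  have h3 : (ψ - χ ≫ mt) ≫ T.mor₂ = 0 := by
    have hh : (χ ≫ m) ≫ q = (χ ≫ mt) ≫ T.mor₂ :=
      (assoc _ _ _).trans ((congrArg (χ ≫ ·) hmt).trans (assoc _ _ _).symm)
    rw [Preadditive.sub_comp, ← hpq, hχ]; exact sub_eq_zero.mpr hh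
  obtain ⟨ζ, hζ⟩ := Triangle.coyoneda_exact₂ _ hT (ψ - χ ≫ mt) h3
  refine ⟨(H⟦(-1:ℤ)⟧) ⊞ T.obj₁, hI.biprod_mem _ _ (hI.shift_mem _ _ hH) h₁,
    biprod.lift χ ζ, biprod.desc mt T.mor₁, ?_⟩
  refine biprod.lift_desc.trans ?_
  rw [← hζ]
  exact (add_comm _ _).trans (sub_add_cancel _ _)

/-- `g` is a `I`-step: it fits in a distinguished triangle whose fiber is in `I`. -/
def IsStep (I : Set C) {x y : C} (g : x ⟶ y) : Prop :=
  ∃ (A : C) (_ : A ∈ I) (u : A ⟶ x) (w : y ⟶ A⟦(1:ℤ)⟧), Triangle.mk u g w ∈ distTriang C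

/-- Morphisms that are composites of isomorphisms and `I`-steps. -/
inductive Good (I : Set C) : ∀ {x y : C}, (x ⟶ y) → Prop
  | of_iso {x y : C} (g : x ⟶ y) (hg : IsIso g) : Good I g
  | comp_step {x y z : C} (g : x ⟶ y) (h : y ⟶ z) (hg : Good I g) (hh : IsStep I h) :
      Good I (g ≫ h)
  | comp_iso {x y z : C} (g : x ⟶ y) (h : y ⟶ z) (hg : Good I g) (hh : IsIso h) :
      Good I (g ≫ h)

lemma Good.id (I : Set C) (x : C) : Good I (𝟙 x) := Good.of_iso _ inferInstance

lemma IsStep.good {I : Set C} {x y : C} {g : x ⟶ y} (hg : IsStep I g) : Good I g := by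
  have := Good.comp_step (𝟙 x) g (Good.id I x) hg
  rwa [id_comp] at this

lemma Good.comp {I : Set C} {x y z : C} {g : x ⟶ y} {h : y ⟶ z}
    (hg : Good I g) (hh : Good I h) : Good I (g ≫ h) := by
  induction hh with
  | of_iso h hiso => exact Good.comp_iso _ _ hg hiso
  | comp_step h₁ h₂ hh₁ hh₂ ih => rw [← assoc]; exact Good.comp_step _ _ ih hh₂
  | comp_iso h₁ h₂ hh₁ hh₂ ih => rw [← assoc]; exact Good.comp_iso _ _ ih hh₂

/-- The peeling theorem: a `Good` morphism factoring through `I` forces its source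
into `I`. -/
lemma Good.src_mem {I : Set C} (hI : IsTTIdeal I) {x y : C} {g : x ⟶ y}
    (hg : Good I g) (hf : FactorsThru I g) : x ∈ I := by
  induction hg with
  | of_iso g hiso =>
      obtain ⟨G, hG, p, q, hpq⟩ := hf
      exact hI.retract_mem _ _ hG p (q ≫ inv g) (by rw [← assoc, hpq]; simp)
  | comp_step g h hg hh ih =>
      obtain ⟨A, hA, u, w, hT⟩ := hh
      exact ih (peel hI _ hT hA g hf)
  | comp_iso g h hg hh ih =>
      refine ih ((hf.postcomp (inv h)).of_eq (by simp))

end PretriangulatedPart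

end TT

namespace TT

variable {C : Type u} [Category.{v} C]

section ChainDefs

variable [MonoidalCategory C] [HasZeroObject C] [Preadditive C] [HasShift C ℤ]
  [∀ n : ℤ, (shiftFunctor C n).Additive] [Pretriangulated C]

/-- `z ⊗ U ⊗ ⋯ ⊗ U` (`n` copies of `U`), left-nested. -/
def Tpow (U : C) (z : C) : ℕ → C
  | 0 => z
  | n + 1 => Tpow U z n ⊗ U

/-- Whiskered action of a morphism on `Tpow`. -/
def TpowMap (U : C) {z z' : C} (f : z ⟶ z') : ∀ n, Tpow U z n ⟶ Tpow U z' n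
  | 0 => f
  | n + 1 => TpowMap U f n ▷ U

/-- The basic step `X ⟶ X ⊗ U` induced by `ξ : 𝟙 ⟶ U`. -/
def sig {U : C} (ξ : 𝟙_ C ⟶ U) (X : C) : X ⟶ X ⊗ U := (ρ_ X).inv ≫ (X ◁ ξ)

/-- The `n`-fold chain `z ⟶ z ⊗ U^{⊗n}` of `ξ`-steps. -/
def chain {U : C} (ξ : 𝟙_ C ⟶ U) (z : C) : ∀ n : ℕ, z ⟶ Tpow U z n
  | 0 => 𝟙 z
  | n + 1 => chain ξ z n ≫ sig ξ (Tpow U z n)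

/-- `ξ`-nilpotence of an object. -/
def KillsAt {U : C} (ξ : 𝟙_ C ⟶ U) (z : C) : Prop := ∃ n : ℕ, chain ξ z n = 0

variable {U : C} {ξ : 𝟙_ C ⟶ U}

lemma sig_natural {X Y : C} (f : X ⟶ Y) : f ≫ sig ξ Y = sig ξ X ≫ (f ▷ U) := by
  simp only [sig, assoc]
  rw [whisker_exchange, rightUnitor_inv_naturality_assoc]

@[simp] lemma TpowMap_id (z : C) (n : ℕ) : TpowMap U (𝟙 z) n = 𝟙 (Tpow U z n) := by
  induction n with
  | zero => rfl
  | succ n ih => show TpowMap U (𝟙 z) n ▷ U = _ ; rw [ih]; simp [Tpow]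

lemma TpowMap_comp {z z' z'' : C} (f : z ⟶ z') (g : z' ⟶ z'') (n : ℕ) :
    TpowMap U (f ≫ g) n = TpowMap U f n ≫ TpowMap U g n := by
  induction n with
  | zero => rfl
  | succ n ih => show TpowMap U (f ≫ g) n ▷ U = _ ; rw [ih]; simp [TpowMap]; rfl

lemma chain_natural {z z' : C} (f : z ⟶ z') (n : ℕ) :
    f ≫ chain ξ z' n = chain ξ z n ≫ TpowMap U f n := by
  induction n with
  | zero => simp [chain, TpowMap]; exact (comp_id f).trans (id_comp f).symm
  | succ n ih =>
      show f ≫ chain ξ z' n ≫ sig ξ _ = (chain ξ z n ≫ sig ξ _) ≫ TpowMap U f n ▷ U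
      rw [← assoc, ih, assoc, assoc, sig_natural (TpowMap U f n)]

lemma Tpow_add (z : C) (m n : ℕ) : Tpow U (Tpow U z m) n = Tpow U z (m + n) := by
  induction n with
  | zero => rfl
  | succ n ih => show Tpow U (Tpow U z m) n ⊗ U = Tpow U z (m + n) ⊗ U; rw [ih]

lemma sig_eqToHom {X Y : C} (h : X = Y) :
    eqToHom h ≫ sig ξ Y = sig ξ X ≫ eqToHom (by rw [h]) := by
  subst h; simp

lemma chain_add (z : C) (m n : ℕ) :
    chain ξ z (m + n) = chain ξ z m ≫ chain ξ (Tpow U z m) n ≫ eqToHom (Tpow_add z m n) := by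
  induction n with
  | zero => simp [chain]; exact ((congrArg (chain ξ z m ≫ ·) ((id_comp _).trans (eqToHom_refl _ _))).trans (comp_id _)).symm
  | succ n ih =>
      show chain ξ z (m + n) ≫ sig ξ _ = _
      rw [ih]
      simp only [chain, assoc]
      rw [sig_eqToHom (Tpow_add z m n)]
      exact congrArg (chain ξ z m ≫ ·) (assoc _ _ _).symm

lemma KillsAt.of_iso {z z' : C} (e : z ≅ z') (h : KillsAt ξ z) : KillsAt ξ z' := by
  obtain ⟨n, hn⟩ := h
  refine ⟨n, ?_⟩
  calc chain ξ z' n = e.inv ≫ e.hom ≫ chain ξ z' n := by simp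
  _ = e.inv ≫ chain ξ z n ≫ TpowMap U e.hom n := by rw [chain_natural]
  _ = 0 := by rw [hn]; simp

lemma KillsAt.retract {x z : C} (i : x ⟶ z) (r : z ⟶ x) (hir : i ≫ r = 𝟙 x)
    (h : KillsAt ξ z) : KillsAt ξ x := by
  obtain ⟨n, hn⟩ := h
  refine ⟨n, ?_⟩
  calc chain ξ x n = i ≫ r ≫ chain ξ x n := by rw [← assoc, hir, id_comp]
  _ = i ≫ chain ξ z n ≫ TpowMap U r n := by rw [chain_natural]
  _ = 0 := by rw [hn]; simp

lemma KillsAt.of_isZero {z : C} (h : IsZero z) : KillsAt ξ z :=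
  ⟨1, h.eq_of_src _ _⟩

/-- Nilpotence is inherited along arbitrary post-composition of `ξ`. -/
lemma chain_comp_factor {U' : C} (g : U ⟶ U') (z : C) (n : ℕ) :
    ∃ D : Tpow U z n ⟶ Tpow U' z n, chain (ξ ≫ g) z n = chain ξ z n ≫ D := by
  induction n with
  | zero => exact ⟨𝟙 z, by simp [chain]; exact (comp_id _).symm⟩
  | succ n ih =>
      obtain ⟨D, hD⟩ := ih
      refine ⟨(D ▷ U) ≫ ((Tpow U' z n) ◁ g), ?_⟩
      show chain (ξ ≫ g) z n ≫ sig (ξ ≫ g) _ = _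
      have h1 : sig (ξ ≫ g) (Tpow U' z n) = sig ξ (Tpow U' z n) ≫ ((Tpow U' z n) ◁ g) := by
        simp [sig]
      rw [hD, assoc, h1, ← assoc D, sig_natural D]
      simp [chain, assoc]
      exact (assoc _ _ _).symm

lemma KillsAt.postcomp {U' : C} (g : U ⟶ U') {z : C} (h : KillsAt ξ z) :
    KillsAt (ξ ≫ g) z := by
  obtain ⟨n, hn⟩ := h
  obtain ⟨D, hD⟩ := chain_comp_factor (ξ := ξ) g z n
  exact ⟨n, by rw [hD, hn, zero_comp]⟩

/-- Structural identity allowing to commute two `ξ`'s. -/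
lemma xi_comm {U₁ U₂ : C} (ξ₁ : 𝟙_ C ⟶ U₁) (ξ₂ : 𝟙_ C ⟶ U₂) :
    ξ₁ ≫ sig ξ₂ U₁ = ξ₂ ≫ ((λ_ U₂).inv ≫ (ξ₁ ▷ U₂)) := by
  simp only [sig]
  rw [rightUnitor_inv_naturality_assoc, ← whisker_exchange, ← unitors_inv_equal,
    ← leftUnitor_inv_naturality_assoc]

/-- `Tpow` of a tensor product, compared with whiskering. -/
def tensorTpowIso (U : C) (a z : C) : ∀ n, Tpow U (a ⊗ z) n ≅ a ⊗ Tpow U z n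
  | 0 => Iso.refl _
  | n + 1 => whiskerRightIso (tensorTpowIso U a z n) U ≪≫ α_ a (Tpow U z n) U

lemma sig_tensor (a W : C) : sig ξ (a ⊗ W) ≫ (α_ a W U).hom = a ◁ sig ξ W := by
  simp only [sig, MonoidalCategory.whiskerLeft_comp]
  rw [rightUnitor_tensor_inv]
  simp only [assoc]
  congr 1
  rw [← associator_inv_naturality_right_assoc]
  simp

lemma chain_tensor (a z : C) (n : ℕ) :
    chain ξ (a ⊗ z) n ≫ (tensorTpowIso U a z n).hom = a ◁ chain ξ z n := by
  induction n with
  | zero => simp [chain, tensorTpowIso]; exact (id_comp _).trans (MonoidalCategory.whiskerLeft_id a z).symm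
  | succ n ih =>
      show (chain ξ (a ⊗ z) n ≫ sig ξ _) ≫ ((tensorTpowIso U a z n).hom ▷ U) ≫ _ = _
      rw [assoc, ← assoc (sig ξ _), ← sig_natural (tensorTpowIso U a z n).hom]
      rw [← assoc, ← assoc, ih, assoc]; erw [sig_tensor]
      show _ = a ◁ (chain ξ z n ≫ sig ξ (Tpow U z n))
      rw [MonoidalCategory.whiskerLeft_comp]
      rfl

lemma isZero_tensor_zero (hC : TensorExact C) (a : C) : IsZero (a ⊗ (0 : C)) := by
  obtain ⟨h', hT'⟩ := (hC a _ (contractible_distinguished (0 : C))).1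
  have : IsIso (Triangle.mk (a ◁ 𝟙 (0 : C)) (a ◁ (0 : (0:C) ⟶ 0)) h').mor₁ := by
    show IsIso (a ◁ 𝟙 (0 : C)); rw [MonoidalCategory.whiskerLeft_id]; infer_instance
  exact Triangle.isZero₃_of_isIso₁ _ hT' this

lemma whiskerLeft_zero' (hC : TensorExact C) (a : C) {x y : C} :
    a ◁ (0 : x ⟶ y) = 0 := by
  have hz : (0 : x ⟶ y) = (0 : x ⟶ (0 : C)) ≫ (0 : (0 : C) ⟶ y) := by simp
  rw [hz, MonoidalCategory.whiskerLeft_comp]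
  rw [(isZero_tensor_zero hC a).eq_of_src (a ◁ (0 : (0 : C) ⟶ y)) 0, comp_zero]

lemma KillsAt.tensor_left (hC : TensorExact C) (a : C) {z : C} (h : KillsAt ξ z) :
    KillsAt ξ (a ⊗ z) := by
  obtain ⟨n, hn⟩ := h
  refine ⟨n, ?_⟩
  have h0 : a ◁ chain ξ z n = 0 := by rw [hn, whiskerLeft_zero' hC]
  have := chain_tensor (ξ := ξ) a z n
  rw [h0] at this
  calc chain ξ (a ⊗ z) n
      = (chain ξ (a ⊗ z) n ≫ (tensorTpowIso U a z n).hom) ≫ (tensorTpowIso U a z n).inv := by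
        simp
  _ = 0 := by rw [this, zero_comp]

/-- The cone lemma: `ξ`-nilpotence propagates to cones. -/
lemma KillsAt.cone (T : Triangle C) (hT : T ∈ distTriang C)
    (h₁ : KillsAt ξ (T.obj₁⟦(1:ℤ)⟧)) (h₂ : KillsAt ξ T.obj₂) : KillsAt ξ T.obj₃ := by
  obtain ⟨n₁, hn₁⟩ := h₁
  obtain ⟨m, hm⟩ := h₂
  have h0 : T.rotate.mor₁ ≫ chain ξ T.obj₃ m = 0 := by
    show T.mor₂ ≫ chain ξ T.obj₃ m = 0
    rw [chain_natural T.mor₂ m, hm, zero_comp]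
  obtain ⟨e, he⟩ := Triangle.yoneda_exact₂ _ (rot_of_distTriang _ hT) (chain ξ T.obj₃ m) h0
  refine ⟨m + n₁, ?_⟩
  rw [chain_add, he]; erw [assoc]; rw [← assoc e, chain_natural e n₁]
  have hz : chain ξ T.rotate.obj₃ n₁ = 0 := hn₁
  rw [hz]
  simp
  exact comp_zero

end ChainDefs

end TT

namespace TT

variable {C : Type u} [Category.{v} C]
  [MonoidalCategory C] [HasZeroObject C] [Preadditive C] [HasShift C ℤ]
  [∀ n : ℤ, (shiftFunctor C n).Additive] [Pretriangulated C]

section GoodWhisker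

variable {I : Set C}

lemma IsStep.whiskerLeft (hC : TensorExact C) (hI : IsTTIdeal I) {x y : C} {g : x ⟶ y}
    (hg : IsStep I g) (a : C) : IsStep I (a ◁ g) := by
  obtain ⟨A, hA, u, w, hT⟩ := hg
  obtain ⟨h, hT'⟩ := (hC a _ hT).1
  exact ⟨a ⊗ A, hI.tensor_mem' A hA a, a ◁ u, h, hT'⟩

lemma IsStep.whiskerRight (hC : TensorExact C) (hI : IsTTIdeal I) {x y : C} {g : x ⟶ y}
    (hg : IsStep I g) (a : C) : IsStep I (g ▷ a) := by
  obtain ⟨A, hA, u, w, hT⟩ := hg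
  obtain ⟨h, hT'⟩ := (hC a _ hT).2
  exact ⟨A ⊗ a, hI.tensor_mem A hA a, u ▷ a, h, hT'⟩

lemma Good.whiskerLeft (hC : TensorExact C) (hI : IsTTIdeal I) {x y : C} {g : x ⟶ y}
    (hg : Good I g) (a : C) : Good I (a ◁ g) := by
  induction hg with
  | of_iso g hiso =>
      exact Good.of_iso _ ((whiskerLeftIso a (asIso g)).isIso_hom)
  | comp_step g h hg hh ih =>
      rw [MonoidalCategory.whiskerLeft_comp]
      exact Good.comp_step _ _ ih (hh.whiskerLeft hC hI a)
  | comp_iso g h hg hh ih =>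
      rw [MonoidalCategory.whiskerLeft_comp]
      exact Good.comp_iso _ _ ih ((whiskerLeftIso a (asIso h)).isIso_hom)

lemma Good.whiskerRight (hC : TensorExact C) (hI : IsTTIdeal I) {x y : C} {g : x ⟶ y}
    (hg : Good I g) (a : C) : Good I (g ▷ a) := by
  induction hg with
  | of_iso g hiso =>
      exact Good.of_iso _ ((whiskerRightIso (asIso g) a).isIso_hom)
  | comp_step g h hg hh ih =>
      rw [MonoidalCategory.comp_whiskerRight]
      exact Good.comp_step _ _ ih (hh.whiskerRight hC hI a)
  | comp_iso g h hg hh ih =>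
      rw [MonoidalCategory.comp_whiskerRight]
      exact Good.comp_iso _ _ ih ((whiskerRightIso (asIso h) a).isIso_hom)

lemma Good.tensorHom (hC : TensorExact C) (hI : IsTTIdeal I) {x y x' y' : C}
    {g : x ⟶ y} {g' : x' ⟶ y'} (hg : Good I g) (hg' : Good I g') : Good I (g ⊗ₘ g') := by
  rw [MonoidalCategory.tensorHom_def]
  exact (hg.whiskerRight hC hI x').comp (hg'.whiskerLeft hC hI y)

lemma Good.sig (hC : TensorExact C) (hI : IsTTIdeal I) {U : C} {ξ : 𝟙_ C ⟶ U}
    (hξ : Good I ξ) (X : C) : Good I (TT.sig ξ X) :=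
  (Good.of_iso (ρ_ X).inv inferInstance).comp (hξ.whiskerLeft hC hI X)

lemma Good.chain (hC : TensorExact C) (hI : IsTTIdeal I) {U : C} {ξ : 𝟙_ C ⟶ U}
    (hξ : Good I ξ) (z : C) (n : ℕ) : Good I (TT.chain ξ z n) := by
  induction n with
  | zero => exact Good.id I z
  | succ n ih => exact ih.comp (hξ.sig hC hI _)

lemma Good.mpow (hC : TensorExact C) (hI : IsTTIdeal I) {x y : C} {f : x ⟶ y}
    (hf : Good I f) (n : ℕ) : Good I (mpow f n) := by
  induction n with
  | zero => exact Good.id I _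
  | succ n ih => exact ih.tensorHom hC hI hf

end GoodWhisker

section ShiftIso

lemma tensor_shift_one (hC : TensorExact C) (a z : C) :
    Nonempty ((a ⊗ (z⟦(1:ℤ)⟧)) ≅ ((a ⊗ z)⟦(1:ℤ)⟧)) := by
  obtain ⟨h, hT'⟩ :=
    (hC a _ (rot_of_distTriang _ (contractible_distinguished z))).1
  have hzero : IsZero (Triangle.mk (a ◁ (contractibleTriangle z).rotate.mor₁)
      (a ◁ (contractibleTriangle z).rotate.mor₂) h).obj₂ := isZero_tensor_zero hC a
  have := (Triangle.isZero₂_iff_isIso₃ _ hT').1 hzero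
  exact ⟨@asIso _ _ _ _ _ this⟩

lemma tensor_shift (hC : TensorExact C) (a z : C) (k : ℤ) :
    Nonempty ((a ⊗ (z⟦k⟧)) ≅ ((a ⊗ z)⟦k⟧)) := by
  induction k using Int.induction_on with
  | zero =>
      exact ⟨whiskerLeftIso a ((shiftFunctorZero C ℤ).app z) ≪≫
        ((shiftFunctorZero C ℤ).app (a ⊗ z)).symm⟩
  | succ k ih =>
      obtain ⟨e⟩ := ih
      obtain ⟨e₁⟩ := tensor_shift_one hC a (z⟦(k:ℤ)⟧)
      refine ⟨whiskerLeftIso a ((shiftFunctorAdd C (k:ℤ) 1).app z) ≪≫ e₁ ≪≫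
        (shiftFunctor C (1:ℤ)).mapIso e ≪≫ ((shiftFunctorAdd C (k:ℤ) 1).app (a ⊗ z)).symm⟩
  | pred k ih =>
      obtain ⟨e⟩ := ih
      obtain ⟨e₁⟩ := tensor_shift_one hC a (z⟦((-k:ℤ)-1)⟧)
      have c₂ : (z⟦((-k:ℤ)-1)⟧)⟦(1:ℤ)⟧ ≅ z⟦(-k:ℤ)⟧ :=
        ((shiftFunctorAdd' C ((-k:ℤ)-1) 1 (-k) (by ring)).app z).symm
      have c₃ : ((a ⊗ z)⟦((-k:ℤ)-1)⟧)⟦(1:ℤ)⟧ ≅ (a ⊗ z)⟦(-k:ℤ)⟧ :=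
        ((shiftFunctorAdd' C ((-k:ℤ)-1) 1 (-k) (by ring)).app (a ⊗ z)).symm
      have big : ((a ⊗ (z⟦((-k:ℤ)-1)⟧))⟦(1:ℤ)⟧) ≅ ((a ⊗ z)⟦((-k:ℤ)-1)⟧)⟦(1:ℤ)⟧ :=
        e₁.symm ≪≫ whiskerLeftIso a c₂ ≪≫ e ≪≫ c₃.symm
      exact ⟨(shiftFunctor C (1:ℤ)).preimageIso big⟩

end ShiftIso

section Mixing

variable [BraidedCategory C]

lemma mixing_isTTIdeal (hC : TensorExact C) {J : Set C} (hJ : IsTTIdeal J) (z : C) :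
    IsTTIdeal {w : C | (z ⊗ w) ∈ J} := by
  constructor
  · exact hJ.mem_of_isZero (isZero_tensor_zero hC z)
  · intro n w hw
    obtain ⟨e⟩ := tensor_shift hC z w n
    exact hJ.mem_of_iso e (hJ.shift_mem n _ hw)
  · intro T hT h₁ h₂
    obtain ⟨h, hT'⟩ := (hC z T hT).1
    exact hJ.cone_mem _ hT' h₁ h₂
  · intro x w hw i r hir
    exact hJ.retract_mem _ _ hw (z ◁ i) (z ◁ r)
      (by rw [← MonoidalCategory.whiskerLeft_comp, hir, MonoidalCategory.whiskerLeft_id])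
  · intro w hw v
    exact hJ.mem_of_iso (α_ z w v).symm (hJ.tensor_mem _ hw v)
  · intro w hw v
    refine hJ.mem_of_iso (whiskerLeftIso z (β_ v w)) ?_
    exact hJ.mem_of_iso (α_ z w v).symm (hJ.tensor_mem _ hw v)

lemma isTTIdeal_ttIdealGen (E : Set C) : IsTTIdeal (ttIdealGen E) := by
  constructor
  · intro I hI; exact hI.1.zero_mem
  · intro n x hx I hI; exact hI.1.shift_mem n x (hx I hI)
  · intro T hT h₁ h₂ I hI; exact hI.1.cone_mem T hT (h₁ I hI) (h₂ I hI)
  · intro x w hw i r hir I hI; exact hI.1.retract_mem x w (hw I hI) i r hir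
  · intro x hx y I hI; exact hI.1.tensor_mem x (hx I hI) y
  · intro x hx y I hI; exact hI.1.tensor_mem' x (hx I hI) y

lemma subset_ttIdealGen (E : Set C) : E ⊆ ttIdealGen E := by
  intro x hx I hI
  exact hI.2 hx

lemma ttIdealGen_le {E I : Set C} (hI : IsTTIdeal I) (hE : E ⊆ I) : ttIdealGen E ⊆ I :=
  fun _ hx => hx I ⟨hI, hE⟩

lemma tensor_mem_ttIdealGen (hC : TensorExact C) {E₁ E₂ : Set C} {a₁ a₂ : C}
    (h₁ : a₁ ∈ ttIdealGen E₁) (h₂ : a₂ ∈ ttIdealGen E₂) :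
    (a₁ ⊗ a₂) ∈ ttIdealGen {u : C | ∃ e₁ ∈ E₁, ∃ e₂ ∈ E₂, u = e₁ ⊗ e₂} := by
  set J := ttIdealGen {u : C | ∃ e₁ ∈ E₁, ∃ e₂ ∈ E₂, u = e₁ ⊗ e₂} with hJdef
  have hJ : IsTTIdeal J := isTTIdeal_ttIdealGen _
  have step1 : ∀ e₁ ∈ E₁, (e₁ ⊗ a₂) ∈ J := by
    intro e₁ he₁
    have hA : IsTTIdeal {w : C | (e₁ ⊗ w) ∈ J} := mixing_isTTIdeal hC hJ e₁
    have hE₂ : E₂ ⊆ {w : C | (e₁ ⊗ w) ∈ J} := by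
      intro e₂ he₂
      exact subset_ttIdealGen _ ⟨e₁, he₁, e₂, he₂, rfl⟩
    exact ttIdealGen_le hA hE₂ h₂
  have hB : IsTTIdeal {v : C | (a₂ ⊗ v) ∈ J} := mixing_isTTIdeal hC hJ a₂
  have hE₁ : E₁ ⊆ {v : C | (a₂ ⊗ v) ∈ J} := by
    intro e₁ he₁
    exact hJ.mem_of_iso (β_ a₂ e₁) (step1 e₁ he₁)
  have : a₁ ∈ {v : C | (a₂ ⊗ v) ∈ J} := ttIdealGen_le hB hE₁ h₁
  exact hJ.mem_of_iso (β_ a₁ a₂) this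

end Mixing

end TT

namespace TT

variable {C : Type u} [Category.{v} C]
  [MonoidalCategory C] [HasZeroObject C] [Preadditive C] [HasShift C ℤ]
  [∀ n : ℤ, (shiftFunctor C n).Additive] [Pretriangulated C] [BraidedCategory C]

/-- From an exact pairing for `y ∈ P`, produce the basic `ξ`-datum: a morphism
`ξ : 𝟙 ⟶ U` which is a `P`-step and which kills `y`. -/
lemma exists_xi_datum (hC : TensorExact C) {P : Set C} (hP : IsTTIdeal P) {y : C}
    (hy : y ∈ P) (yd : C) (pair : ExactPairing yd y) :
    ∃ (U : C) (ξ : 𝟙_ C ⟶ U), IsStep P ξ ∧ KillsAt ξ y := by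
  obtain ⟨U, ξ, δ, hT⟩ := distinguished_cocone_triangle (ExactPairing.evaluation yd y)
  refine ⟨U, ξ, ⟨y ⊗ yd, hP.tensor_mem y hy yd, _, δ, hT⟩, ?_⟩
  obtain ⟨h', hT'⟩ := (hC y _ hT).2
  have hsec : ((λ_ y).hom ≫ (ρ_ y).inv ≫ (y ◁ ExactPairing.coevaluation yd y) ≫
      (α_ y yd y).inv) ≫ ((Triangle.mk (ExactPairing.evaluation yd y) ξ δ).mor₁ ▷ y) =
      𝟙 (𝟙_ C ⊗ y) := by
    show _ ≫ (ExactPairing.evaluation yd y ▷ y) = _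
    simp only [assoc]
    rw [ExactPairing.coevaluation_evaluation]
    simp
  have hz : (ξ ▷ y) = 0 := by
    have h0 : ((Triangle.mk (ExactPairing.evaluation yd y) ξ δ).mor₁ ▷ y) ≫ (ξ ▷ y) = 0 :=
      comp_distTriang_mor_zero₁₂ _ hT'
    calc ξ ▷ y = (((λ_ y).hom ≫ (ρ_ y).inv ≫ (y ◁ ExactPairing.coevaluation yd y) ≫
          (α_ y yd y).inv) ≫ ((Triangle.mk (ExactPairing.evaluation yd y) ξ δ).mor₁ ▷ y)) ≫
          (ξ ▷ y) := by rw [hsec]; exact (id_comp _).symm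
    _ = 0 := (assoc _ _ _).trans ((congrArg (fun t => ((λ_ y).hom ≫ (ρ_ y).inv ≫
          (y ◁ ExactPairing.coevaluation yd y) ≫ (α_ y yd y).inv) ≫ t) h0).trans comp_zero)
  have hy0 : y ◁ ξ = 0 := by
    have hnat := BraidedCategory.braiding_naturality_right y ξ
    rw [hz, comp_zero] at hnat
    calc y ◁ ξ = (y ◁ ξ ≫ (β_ y U).hom) ≫ (β_ y U).inv := by simp
    _ = 0 := by rw [hnat, zero_comp]
  exact ⟨1, by show 𝟙 y ≫ ((ρ_ y).inv ≫ (y ◁ ξ)) = 0; rw [hy0]; simp⟩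

end TT

namespace TT

section Transfer

variable {K : Type u} [Category.{v} K] [MonoidalCategory K]
variable {L : Type u'} [Category.{v'} L] [MonoidalCategory L]
variable (F : K ⥤ L) [F.Monoidal]
variable [HasZeroObject K] [Preadditive K] [HasShift K ℤ]
  [∀ n : ℤ, (shiftFunctor K n).Additive] [Pretriangulated K]
variable [HasZeroObject L] [Preadditive L] [HasShift L ℤ]
  [∀ n : ℤ, (shiftFunctor L n).Additive] [Pretriangulated L]

/-- Comparison isomorphisms `F (z ⊗ U^{⊗n}) ≅ F z ⊗ (F U)^{⊗n}`. -/
noncomputable def nuIso (U W : K) : ∀ n, F.obj (Tpow U W n) ≅ Tpow (F.obj U) (F.obj W) n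
  | 0 => Iso.refl _
  | n + 1 => (Functor.Monoidal.μIso F (Tpow U W n) U).symm ≪≫
      whiskerRightIso (nuIso U W n) (F.obj U)

/-- The image of `ξ` in `L`. -/
def xiL {U : K} (ξ : 𝟙_ K ⟶ U) : 𝟙_ L ⟶ F.obj U := Functor.LaxMonoidal.ε F ≫ F.map ξ

lemma xiL_comp {U U' : K} (ξ : 𝟙_ K ⟶ U) (g : U ⟶ U') :
    xiL F (ξ ≫ g) = xiL F ξ ≫ F.map g := by
  simp [xiL]

lemma map_sig {U : K} (ξ : 𝟙_ K ⟶ U) (X : K) :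
    F.map (sig ξ X) = sig (xiL F ξ) (F.obj X) ≫ Functor.LaxMonoidal.μ F X U := by
  rw [sig, F.map_comp, Functor.Monoidal.map_rightUnitor_inv, Functor.Monoidal.map_whiskerLeft]
  simp [sig, xiL, MonoidalCategory.whiskerLeft_comp]

lemma map_chain {U : K} (ξ : 𝟙_ K ⟶ U) (W : K) (n : ℕ) :
    F.map (chain ξ W n) ≫ (nuIso F U W n).hom = chain (xiL F ξ) (F.obj W) n := by
  induction n with
  | zero => simp [chain, nuIso]; exact (comp_id _).trans (F.map_id W)
  | succ n ih =>
      show F.map (chain ξ W n ≫ sig ξ (Tpow U W n)) ≫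
          (Functor.Monoidal.μIso F (Tpow U W n) U).inv ≫ ((nuIso F U W n).hom ▷ F.obj U) = _
      rw [F.map_comp, map_sig, assoc, assoc]
      have hμ : Functor.LaxMonoidal.μ F (Tpow U W n) U ≫
          (Functor.Monoidal.μIso F (Tpow U W n) U).inv ≫ ((nuIso F U W n).hom ▷ F.obj U) =
          (nuIso F U W n).hom ▷ F.obj U := by
        rw [← assoc, ← Functor.Monoidal.μIso_hom, Iso.hom_inv_id, id_comp]
      rw [hμ, ← sig_natural (ξ := xiL F ξ) (nuIso F U W n).hom, ← assoc, ih]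
      rfl

/-- Transfer of `ξ`-nilpotence through `F`. -/
lemma KillsAt.map [F.Additive] {U : K} {ξ : 𝟙_ K ⟶ U} {w : K} (h : KillsAt ξ w) :
    KillsAt (xiL F ξ) (F.obj w) := by
  obtain ⟨n, hn⟩ := h
  exact ⟨n, by rw [← map_chain, hn, F.map_zero, zero_comp]⟩

end Transfer

section Heart

variable {K : Type u} [Category.{v} K] [MonoidalCategory K] [HasZeroObject K] [Preadditive K]
  [HasShift K ℤ] [∀ n : ℤ, (shiftFunctor K n).Additive] [Pretriangulated K]

lemma mem_of_opow_mem {P : Set K} (hP : IsPrimeTTIdeal P) (s : K) (m : ℕ)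
    (h : opow s m ∈ P) : s ∈ P := by
  induction m with
  | zero => exact absurd (hP.toIsTTIdeal.univ_of_unit_mem h) hP.ne_univ
  | succ m ih =>
      rcases hP.mem_or_mem _ _ h with h' | h'
      · exact ih h'
      · exact h'

end Heart

end TT

open TT

variable {K : Type u} [Category.{v} K] [HasZeroObject K] [Preadditive K]
  [HasShift K ℤ] [∀ n : ℤ, (shiftFunctor K n).Additive] [Pretriangulated K]
  [MonoidalCategory K] [SymmetricCategory K] [EssentiallySmall.{v} K]
variable {L : Type u'} [Category.{v'} L] [HasZeroObject L] [Preadditive L]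
  [HasShift L ℤ] [∀ n : ℤ, (shiftFunctor L n).Additive] [Pretriangulated L]
  [MonoidalCategory L] [SymmetricCategory L] [EssentiallySmall.{v'} L]

/-- **Theorem (Balmer).** Let `K`, `L` be essentially small tt-categories with `K` rigid
and `F : K ⥤ L` a tt-functor. If `F` detects ⊗-nilpotence of morphisms
(`F(f) = 0 ⟹ f^⊗n = 0` for some `n ≥ 1`), then the induced map
`φ = Spc F : Spc L → Spc K`, `Q ↦ F⁻¹(Q)`, is surjective. -/
theorem surjective_of_detects_nilpotence
    (hK : TensorExact K) (hL : TensorExact L) (hrigid : Rigid K)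
    (F : K ⥤ L) [F.CommShift ℤ] [F.IsTriangulated] [F.Monoidal]
    (hdet : ∀ ⦃x y : K⦄ (f : x ⟶ y), F.map f = 0 → ∃ n : ℕ, 1 ≤ n ∧ mpow f n = 0) :
    ∀ P : Spc K, ∃ Q : Spc L, {x : K | F.obj x ∈ Q.1} = P.1 := by
  intro P
  classical
  obtain ⟨Pset, hP⟩ := P
  dsimp only
  set N : Set L := {z : L | ∀ k : ℤ, ∃ (U : K) (ξ : 𝟙_ K ⟶ U),
    Good Pset ξ ∧ KillsAt (xiL F ξ) ((z⟦k⟧ : L))} with hNdef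
  -- N is a tt-ideal
  have hNideal : IsTTIdeal N := by
    constructor
    · intro k
      exact ⟨𝟙_ K, 𝟙 (𝟙_ K), Good.id _ _,
        KillsAt.of_isZero ((shiftFunctor L k).map_isZero (isZero_zero L))⟩
    · intro n x hx k
      obtain ⟨U, ξ, hg, hk⟩ := hx (n + k)
      exact ⟨U, ξ, hg, hk.of_iso ((shiftFunctorAdd' L n k (n + k) rfl).app x)⟩
    · intro T hT h₁ h₂ k
      obtain ⟨U₁, ξ₁, hg₁, hk₁⟩ := h₁ (k + 1)
      obtain ⟨U₂, ξ₂, hg₂, hk₂⟩ := h₂ k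
      refine ⟨U₁ ⊗ U₂, ξ₁ ≫ sig ξ₂ U₁,
        hg₁.comp (hg₂.sig hK hP.toIsTTIdeal U₁), ?_⟩
      have e1 : KillsAt (xiL F ξ₁ ≫ F.map (sig ξ₂ U₁)) ((T.obj₁⟦k⟧)⟦(1:ℤ)⟧) :=
        (hk₁.of_iso ((shiftFunctorAdd' L k 1 (k + 1) rfl).app T.obj₁)).postcomp _
      rw [← xiL_comp] at e1
      have e2 : KillsAt (xiL F ξ₂ ≫ F.map ((λ_ U₂).inv ≫ (ξ₁ ▷ U₂))) (T.obj₂⟦k⟧) :=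
        hk₂.postcomp _
      rw [← xiL_comp, ← xi_comm] at e2
      have hTk : (Triangle.shiftFunctor L k).obj T ∈ distTriang L :=
        Triangle.shift_distinguished T hT k
      exact KillsAt.cone _ hTk e1 e2
    · intro x z hz i r hir k
      obtain ⟨U, ξ, hg, hk⟩ := hz k
      exact ⟨U, ξ, hg, hk.retract ((shiftFunctor L k).map i) ((shiftFunctor L k).map r)
        (by rw [← (shiftFunctor L k).map_comp, hir, (shiftFunctor L k).map_id])⟩
    · intro x hx y k
      obtain ⟨U, ξ, hg, hk⟩ := hx k
      refine ⟨U, ξ, hg, ?_⟩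
      obtain ⟨e⟩ := tensor_shift hL y x k
      exact ((hk.tensor_left hL y).of_iso e).of_iso ((shiftFunctor L k).mapIso (β_ y x))
    · intro x hx y k
      obtain ⟨U, ξ, hg, hk⟩ := hx k
      refine ⟨U, ξ, hg, ?_⟩
      obtain ⟨e⟩ := tensor_shift hL y x k
      exact (hk.tensor_left hL y).of_iso e
  -- N contains the image of P
  have hNP : ∀ p ∈ Pset, F.obj p ∈ N := by
    intro p hp k
    have hy : (p⟦k⟧ : K) ∈ Pset := hP.toIsTTIdeal.shift_mem k p hp
    obtain ⟨yd, ⟨pair⟩⟩ := hrigid (p⟦k⟧ : K)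
    obtain ⟨U, ξ, hstep, hkill⟩ := exists_xi_datum hK hP.toIsTTIdeal hy yd pair
    exact ⟨U, ξ, hstep.good, (hkill.map F).of_iso ((F.commShiftIso k).app p)⟩
  -- N avoids the image of the complement of P (the "heart")
  have hNT : ∀ s : K, s ∉ Pset → F.obj s ∉ N := by
    intro s hs hsN
    obtain ⟨U, ξ, hGood, hk⟩ := hsN 0
    have hk0 : KillsAt (xiL F ξ) (F.obj s) :=
      hk.of_iso ((shiftFunctorZero L ℤ).app (F.obj s))
    obtain ⟨n, hn⟩ := hk0
    have hF0 : F.map (chain ξ s n) = 0 := by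
      have h1 := map_chain F ξ s n
      rw [hn] at h1
      have h2 := congrArg (fun t => t ≫ (nuIso F U s n).inv) h1
      simpa using h2
    obtain ⟨m, hm1, hm0⟩ := hdet _ hF0
    have hGm : Good Pset (mpow (chain ξ s n) m) :=
      (hGood.chain hK hP.toIsTTIdeal s n).mpow hK hP.toIsTTIdeal m
    have hopow : opow s m ∈ Pset :=
      hGm.src_mem hP.toIsTTIdeal ((factorsThru_zero hP.toIsTTIdeal _ _).of_eq hm0.symm)
    exact hs (mem_of_opow_mem hP s m hopow)
  -- Zorn's lemma
  set Zset : Set (Set L) := {I : Set L | IsTTIdeal I ∧ (∀ p ∈ Pset, F.obj p ∈ I) ∧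
    (∀ s : K, s ∉ Pset → F.obj s ∉ I)} with hZdef
  have hNmem : N ∈ Zset := ⟨hNideal, hNP, hNT⟩
  have hchains : ∀ c ⊆ Zset, IsChain (· ⊆ ·) c → c.Nonempty →
      ∃ ub ∈ Zset, ∀ s ∈ c, s ⊆ ub := by
    intro c hc hchain hne
    refine ⟨⋃₀ c, ⟨?_, ?_, ?_⟩, fun s hs => Set.subset_sUnion_of_mem hs⟩
    · constructor
      · obtain ⟨I, hI⟩ := hne
        exact ⟨I, hI, (hc hI).1.zero_mem⟩
      · rintro n x ⟨I, hIc, hxI⟩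
        exact ⟨I, hIc, (hc hIc).1.shift_mem n x hxI⟩
      · rintro T hT ⟨I₁, hI₁, hx₁⟩ ⟨I₂, hI₂, hx₂⟩
        by_cases heq : I₁ = I₂
        · subst heq; exact ⟨I₁, hI₁, (hc hI₁).1.cone_mem T hT hx₁ hx₂⟩
        · rcases hchain hI₁ hI₂ heq with h | h
          · exact ⟨I₂, hI₂, (hc hI₂).1.cone_mem T hT (h hx₁) hx₂⟩
          · exact ⟨I₁, hI₁, (hc hI₁).1.cone_mem T hT hx₁ (h hx₂)⟩
      · rintro x z ⟨I, hIc, hzI⟩ i r hir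
        exact ⟨I, hIc, (hc hIc).1.retract_mem x z hzI i r hir⟩
      · rintro x ⟨I, hIc, hxI⟩ y
        exact ⟨I, hIc, (hc hIc).1.tensor_mem x hxI y⟩
      · rintro x ⟨I, hIc, hxI⟩ y
        exact ⟨I, hIc, (hc hIc).1.tensor_mem' x hxI y⟩
    · intro p hp
      obtain ⟨I, hI⟩ := hne
      exact ⟨I, hI, (hc hI).2.1 p hp⟩
    · rintro s hs ⟨I, hIc, hmem⟩
      exact (hc hIc).2.2 s hs hmem
  obtain ⟨Q, hNQ, hQmax⟩ := zorn_subset_nonempty Zset hchains N hNmem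
  have hQZ : Q ∈ Zset := hQmax.1
  have hQideal : IsTTIdeal Q := hQZ.1
  -- maximality step
  have hstep : ∀ a : L, a ∉ Q → ∃ s : K, s ∉ Pset ∧ F.obj s ∈ ttIdealGen (Q ∪ {a}) := by
    intro a ha
    by_contra hno
    push_neg at hno
    have hZ : ttIdealGen (Q ∪ {a}) ∈ Zset := by
      refine ⟨isTTIdeal_ttIdealGen _, ?_, ?_⟩
      · intro p hp
        exact subset_ttIdealGen _ (Set.mem_union_left _ (hQZ.2.1 p hp))
      · intro s hs hmem
        exact hno s hs hmem
    have hsub : Q ⊆ ttIdealGen (Q ∪ {a}) :=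
      Set.Subset.trans Set.subset_union_left (subset_ttIdealGen _)
    have hback := hQmax.2 hZ hsub
    exact ha (hback (subset_ttIdealGen _ (Set.mem_union_right _ rfl)))
  -- primality
  have hmemor : ∀ a b : L, (a ⊗ b) ∈ Q → a ∈ Q ∨ b ∈ Q := by
    intro a b hab
    by_contra hcon
    push_neg at hcon
    obtain ⟨ha, hb⟩ := hcon
    obtain ⟨s₁, hs₁P, hs₁⟩ := hstep a ha
    obtain ⟨s₂, hs₂P, hs₂⟩ := hstep b hb
    have hprod := tensor_mem_ttIdealGen hL hs₁ hs₂
    have hsubQ : ttIdealGen {u : L | ∃ e₁ ∈ Q ∪ {a}, ∃ e₂ ∈ Q ∪ {b}, u = e₁ ⊗ e₂} ⊆ Q := by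
      refine ttIdealGen_le hQideal ?_
      rintro u ⟨e₁, he₁, e₂, he₂, rfl⟩
      rcases he₁ with h₁ | h₁
      · exact hQideal.tensor_mem e₁ h₁ e₂
      · rcases he₂ with h₂ | h₂
        · rw [Set.mem_singleton_iff] at h₁; subst h₁
          exact hQideal.tensor_mem' e₂ h₂ e₁
        · rw [Set.mem_singleton_iff] at h₁ h₂; subst h₁; subst h₂
          exact hab
    have hFQ : F.obj (s₁ ⊗ s₂) ∈ Q :=
      hQideal.mem_of_iso (Functor.Monoidal.μIso F s₁ s₂).symm (hsubQ hprod)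
    have hs12 : (s₁ ⊗ s₂) ∉ Pset := by
      intro hmem
      rcases hP.mem_or_mem _ _ hmem with h | h
      · exact hs₁P h
      · exact hs₂P h
    exact hQZ.2.2 _ hs12 hFQ
  have hneuniv : Q ≠ Set.univ := by
    intro h
    have h1 : (𝟙_ K) ∉ Pset := fun hmem => hP.ne_univ (hP.toIsTTIdeal.univ_of_unit_mem hmem)
    have h2 : F.obj (𝟙_ K) ∈ Q := by rw [h]; trivial
    exact hQZ.2.2 _ h1 h2
  refine ⟨⟨Q, ⟨hQideal, hneuniv, hmemor⟩⟩, ?_⟩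
  ext x
  constructor
  · intro hx
    by_contra hxP
    exact hQZ.2.2 x hxP hx
  · intro hx
    exact hQZ.2.1 x hx
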